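/- Let N ≥ 1 be an integer and r₁ > r₂ > ⋯ > r_N > 0. For j = 1, 2, let σ₀^{(j)} = 1 and σ₁^{(j)}, …, σ_N^{(j)} be positive real numbers with σ_k^{(j)} ≠ σ_{k−1}^{(j)} for each k, set λ_k^{(j)} := (σ_k^{(j)} + σ_{k−1}^{(j)})/(2(σ_k^{(j)} − σ_{k−1}^{(j)})), and let M_{N,j}^{(n)} be the generalized polarization matrix built from (λ^{(j)}, r); assume M_{N,j}^{(n)} is invertible for every positive integer n and j = 1, 2. Suppose there exist positive integers i₁ < i₂ < ⋯ < i_N such that the N×N matrix 𝕃_N whose k-th row is eᵀ Υ_N^{(i_k)} adj(M_{N,1}^{(i_k)}) and the N×N matrix ℝ_N whose k-th column is adj(M_{N,2}^{(i_k)}) e are both invertible. If eᵀ Υ_N^{(n)} (M_{N,1}^{(n)})^{−1} e = eᵀ Υ_N^{(n)} (M_{N,2}^{(n)})^{−1} e for every positive integer n, then σ_k^{(1)} = σ_k^{(2)} for every k = 1, …, N. -/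

import Mathlib

open Matrix Filter

/-- The `n`-order generalized polarization matrix `M_N^{(n)}` of an `N`-layer concentric
disk structure: diagonal entries `-2λ_i`, entries `(r_j/r_i)^{2n}` above the diagonal and
`-1` below it (indices shifted by one, from `Fin N` to `{1, …, N}`). -/
noncomputable def GPM (N : ℕ) (lam r : ℕ → ℝ) (n : ℕ) : Matrix (Fin N) (Fin N) ℝ :=
  Matrix.of fun i j =>
    if i = j then -2 * lam ((i : ℕ) + 1)
    else if i < j then (r ((j : ℕ) + 1) / r ((i : ℕ) + 1)) ^ (2 * n)
    else -1

/-- `Υ_N^{(n)} = diag(r₁^{2n}, …, r_N^{2n})`. -/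
noncomputable def Upsilon (N : ℕ) (r : ℕ → ℝ) (n : ℕ) : Matrix (Fin N) (Fin N) ℝ :=
  Matrix.diagonal fun i : Fin N => r ((i : ℕ) + 1) ^ (2 * n)

/-! ### Auxiliary definitions for the uniqueness proof -/

/-- The upper-triangular limit of the diagonally conjugated polarization matrix. -/
noncomputable def limU (N : ℕ) (lam : ℕ → ℝ) : Matrix (Fin N) (Fin N) ℝ :=
  Matrix.of fun i j => if i = j then -2 * lam ((i : ℕ) + 1) else if i < j then 1 else 0

/-- The lower-triangular limit of the polarization matrix. -/
noncomputable def limT (N : ℕ) (lam : ℕ → ℝ) : Matrix (Fin N) (Fin N) ℝ :=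
  Matrix.of fun i j => if i = j then -2 * lam ((i : ℕ) + 1) else if i < j then 0 else -1

/-- The diagonal conjugation `Υ M Υ⁻¹` of the polarization matrix. -/
noncomputable def conjM (N : ℕ) (lam r : ℕ → ℝ) (n : ℕ) : Matrix (Fin N) (Fin N) ℝ :=
  Matrix.of fun i j => if i = j then -2 * lam ((i : ℕ) + 1)
    else if i < j then 1 else -((r ((i : ℕ) + 1) / r ((j : ℕ) + 1)) ^ (2 * n))

noncomputable def uu (lam : ℕ → ℝ) (i : ℕ) : ℝ :=
  ∏ q ∈ Finset.range i, ((2 * lam (q + 1) + 1) / (2 * lam (q + 1)))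

noncomputable def ss (lam : ℕ → ℝ) (i : ℕ) : ℝ :=
  ∏ q ∈ Finset.range i, ((2 * lam (q + 1) - 1) / (2 * lam (q + 1)))

noncomputable def gg (lam : ℕ → ℝ) (i : ℕ) : ℝ := -(uu lam i) / (2 * lam (i + 1))

noncomputable def bb (lam : ℕ → ℝ) (i : ℕ) : ℝ := -(ss lam i) / (2 * lam (i + 1))

private lemma auxSumIte {g : ℕ → ℝ} {m N : ℕ} (h : m ≤ N) :
    ∑ j ∈ Finset.range N, (if j < m then g j else 0) = ∑ j ∈ Finset.range m, g j := by
  have h2 : ∑ j ∈ Finset.range m, (if j < m then g j else 0)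
      = ∑ j ∈ Finset.range N, (if j < m then g j else 0) := by
    refine Finset.sum_subset (Finset.range_subset_range.2 h) ?_
    intro x _ hnx
    have : ¬ x < m := fun hc => hnx (Finset.mem_range.2 hc)
    simp [this]
  rw [← h2]
  exact Finset.sum_congr rfl fun j hj => by simp [Finset.mem_range.1 hj]

private lemma auxLam {s p L : ℝ} (hp : 0 < p) (hs : 0 < s) (hne : s ≠ p)
    (hL : L = (s + p) / (2 * (s - p))) :
    2 * L ≠ 0 ∧ 2 * L + 1 ≠ 0 ∧ 2 * L - 1 ≠ 0 := by
  have hsp : s - p ≠ 0 := sub_ne_zero.2 hne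
  have h2L : 2 * L = (s + p) / (s - p) := by
    rw [hL]; field_simp
  refine ⟨?_, ?_, ?_⟩
  · rw [h2L]; exact div_ne_zero (by linarith) hsp
  · have : 2 * L + 1 = (2 * s) / (s - p) := by rw [h2L]; field_simp; ring
    rw [this]; exact div_ne_zero (by linarith) hsp
  · have : 2 * L - 1 = (2 * p) / (s - p) := by rw [h2L]; field_simp; ring
    rw [this]; exact div_ne_zero (by linarith) hsp

private lemma auxLamInj {p s₁ s₂ : ℝ} (hp : 0 < p) (h1 : s₁ ≠ p) (h2 : s₂ ≠ p)
    (he : (s₁ + p) / (2 * (s₁ - p)) = (s₂ + p) / (2 * (s₂ - p))) : s₁ = s₂ := by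
  have d1' : s₁ - p ≠ 0 := sub_ne_zero.2 h1
  have d2' : s₂ - p ≠ 0 := sub_ne_zero.2 h2
  have d1 : (2:ℝ) * (s₁ - p) ≠ 0 := by positivity
  have d2 : (2:ℝ) * (s₂ - p) ≠ 0 := by positivity
  have key : (s₁ + p) * (2 * (s₂ - p)) = (s₂ + p) * (2 * (s₁ - p)) :=
    (div_eq_div_iff d1 d2).1 he
  have h4 : 4 * p * (s₁ - s₂) = 0 := by linear_combination -key
  have hps : 4 * p ≠ 0 := by positivity
  rcases mul_eq_zero.1 h4 with hx | hx
  · exact absurd hx hps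
  · linarith

private lemma auxTendstoInv {N : ℕ} {M : ℕ → Matrix (Fin N) (Fin N) ℝ}
    {L : Matrix (Fin N) (Fin N) ℝ}
    (hM : Tendsto M atTop (nhds L)) (hL : L.det ≠ 0) :
    Tendsto (fun n => (M n)⁻¹) atTop (nhds L⁻¹) := by
  have hdet : Tendsto (fun n => (M n).det) atTop (nhds L.det) :=
    ((Continuous.matrix_det continuous_id).tendsto L).comp hM
  have hadj : Tendsto (fun n => (M n).adjugate) atTop (nhds L.adjugate) :=
    ((Continuous.matrix_adjugate continuous_id).tendsto L).comp hM
  have hinv : Tendsto (fun n => ((M n).det)⁻¹) atTop (nhds (L.det)⁻¹) := hdet.inv₀ hL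
  have := hinv.smul hadj
  simpa [Matrix.inv_def, Ring.inverse_eq_inv'] using this

section AuxFacts
variable {N : ℕ} {lam r : ℕ → ℝ}

lemma uu_ne (h0 : ∀ k, 1 ≤ k → k ≤ N → 2 * lam k ≠ 0)
    (h1 : ∀ k, 1 ≤ k → k ≤ N → 2 * lam k + 1 ≠ 0) :
    ∀ i, i ≤ N → uu lam i ≠ 0 := by
  intro i hi
  refine Finset.prod_ne_zero_iff.2 fun q hq => ?_
  have hq' := Finset.mem_range.1 hq
  exact div_ne_zero (h1 (q+1) (by omega) (by omega)) (h0 (q+1) (by omega) (by omega))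

lemma ss_ne (h0 : ∀ k, 1 ≤ k → k ≤ N → 2 * lam k ≠ 0)
    (h1 : ∀ k, 1 ≤ k → k ≤ N → 2 * lam k - 1 ≠ 0) :
    ∀ i, i ≤ N → ss lam i ≠ 0 := by
  intro i hi
  refine Finset.prod_ne_zero_iff.2 fun q hq => ?_
  have hq' := Finset.mem_range.1 hq
  exact div_ne_zero (h1 (q+1) (by omega) (by omega)) (h0 (q+1) (by omega) (by omega))

lemma gg_ne (h0 : ∀ k, 1 ≤ k → k ≤ N → 2 * lam k ≠ 0)
    (h1 : ∀ k, 1 ≤ k → k ≤ N → 2 * lam k + 1 ≠ 0) :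
    ∀ i, i < N → gg lam i ≠ 0 := fun i hi =>
  div_ne_zero (neg_ne_zero.2 (uu_ne h0 h1 i (by omega))) (h0 (i+1) (by omega) (by omega))

lemma bb_ne (h0 : ∀ k, 1 ≤ k → k ≤ N → 2 * lam k ≠ 0)
    (h1 : ∀ k, 1 ≤ k → k ≤ N → 2 * lam k - 1 ≠ 0) :
    ∀ i, i < N → bb lam i ≠ 0 := fun i hi =>
  div_ne_zero (neg_ne_zero.2 (ss_ne h0 h1 i (by omega))) (h0 (i+1) (by omega) (by omega))

lemma gg_tel (h0 : ∀ k, 1 ≤ k → k ≤ N → 2 * lam k ≠ 0) :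
    ∀ i, i < N → gg lam i = uu lam i - uu lam (i + 1) := by
  intro i hi
  have hne := h0 (i+1) (by omega) (by omega)
  have hstep : uu lam (i+1) = uu lam i * ((2 * lam (i+1) + 1) / (2 * lam (i+1))) := by
    unfold uu; exact Finset.prod_range_succ _ _
  show -(uu lam i) / (2 * lam (i + 1)) = uu lam i - uu lam (i + 1)
  rw [hstep]
  have hne2 : lam (i+1) ≠ 0 := by rintro h; simp [h] at hne
  field_simp
  ring

lemma bb_tel (h0 : ∀ k, 1 ≤ k → k ≤ N → 2 * lam k ≠ 0) :
    ∀ i, i < N → bb lam i = ss lam (i + 1) - ss lam i := by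
  intro i hi
  have hne := h0 (i+1) (by omega) (by omega)
  have hstep : ss lam (i+1) = ss lam i * ((2 * lam (i+1) - 1) / (2 * lam (i+1))) := by
    unfold ss; exact Finset.prod_range_succ _ _
  show -(ss lam i) / (2 * lam (i + 1)) = ss lam (i + 1) - ss lam i
  rw [hstep]
  have hne2 : lam (i+1) ≠ 0 := by rintro h; simp [h] at hne
  field_simp
  ring

lemma gg_sum (h0 : ∀ k, 1 ≤ k → k ≤ N → 2 * lam k ≠ 0) :
    ∀ m, m ≤ N → ∑ j ∈ Finset.range m, gg lam j = 1 - uu lam m := by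
  intro m hm
  induction m with
  | zero => simp [uu]
  | succ m ih =>
    rw [Finset.sum_range_succ, ih (by omega), gg_tel h0 m (by omega)]
    ring

lemma bb_sum (h0 : ∀ k, 1 ≤ k → k ≤ N → 2 * lam k ≠ 0) :
    ∀ m, m ≤ N → ∑ j ∈ Finset.range m, bb lam j = ss lam m - 1 := by
  intro m hm
  induction m with
  | zero => simp [ss]
  | succ m ih =>
    rw [Finset.sum_range_succ, ih (by omega), bb_tel h0 m (by omega)]
    ring

lemma det_limU_ne (h0 : ∀ k, 1 ≤ k → k ≤ N → 2 * lam k ≠ 0) : (limU N lam).det ≠ 0 := by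
  have hset : (limU N lam).det = ∏ i : Fin N, limU N lam i i := by
    apply Matrix.det_of_upperTriangular
    intro i j hji
    have h1 : ¬ (i = j) := by intro hc; subst hc; exact lt_irrefl _ hji
    have h2 : ¬ (i < j) := not_lt.2 (le_of_lt hji)
    simp [limU, h1, h2]
  rw [hset]
  refine Finset.prod_ne_zero_iff.2 fun i _ => ?_
  have h2 := h0 ((i:ℕ)+1) (by omega) (by have := i.isLt; omega)
  have hd : limU N lam i i = -2 * lam ((i:ℕ)+1) := by simp [limU]
  rw [hd]
  intro hc
  exact h2 (by linarith)

lemma det_limT_ne (h0 : ∀ k, 1 ≤ k → k ≤ N → 2 * lam k ≠ 0) : (limT N lam).det ≠ 0 := by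
  have hset : (limT N lam).det = ∏ i : Fin N, limT N lam i i := by
    apply Matrix.det_of_lowerTriangular
    intro i j hji
    have hlt : i < j := hji
    have h1 : ¬ (i = j) := ne_of_lt hlt
    simp [limT, h1, hlt]
  rw [hset]
  refine Finset.prod_ne_zero_iff.2 fun i _ => ?_
  have h2 := h0 ((i:ℕ)+1) (by omega) (by have := i.isLt; omega)
  have hd : limT N lam i i = -2 * lam ((i:ℕ)+1) := by simp [limT]
  rw [hd]
  intro hc
  exact h2 (by linarith)

lemma gv_vecMul (g : ℕ → ℝ)
    (hmain : ∀ m, m < N →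
      g m * (-2 * lam (m+1)) + ∑ j ∈ Finset.range m, g j = 1) :
    (fun i : Fin N => g (i : ℕ)) ᵥ* limU N lam = fun _ => (1:ℝ) := by
  funext m
  have e1 : ((fun i : Fin N => g (i : ℕ)) ᵥ* limU N lam) m
      = ∑ p : Fin N, g (p : ℕ) * limU N lam p m := by
    simp [Matrix.vecMul, dotProduct]
  rw [e1]
  have e2 : ∀ p : Fin N, g (p : ℕ) * limU N lam p m
      = (if (p : ℕ) = (m : ℕ) then g (m : ℕ) * (-2 * lam ((m : ℕ)+1)) else 0)
        + (if (p : ℕ) < (m : ℕ) then g (p : ℕ) else 0) := by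
    intro p
    by_cases hpm : p = m
    · subst hpm
      simp [limU]
    · have hv : ¬ ((p : ℕ) = (m : ℕ)) := fun hc => hpm (Fin.ext hc)
      by_cases hlt : p < m
      · have hlt' : (p : ℕ) < (m : ℕ) := hlt
        simp [limU, hpm, hlt, hv, hlt']
      · have hlt' : ¬ ((p : ℕ) < (m : ℕ)) := fun hc => hlt (Fin.lt_def.2 hc)
        simp [limU, hpm, hlt, hv, hlt']
  rw [Finset.sum_congr rfl fun p _ => e2 p, Finset.sum_add_distrib]
  have e3 : ∑ p : Fin N, (if (p : ℕ) = (m : ℕ) then g (m : ℕ) * (-2 * lam ((m : ℕ)+1)) else 0)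
      = g (m : ℕ) * (-2 * lam ((m : ℕ)+1)) := by
    rw [Fin.sum_univ_eq_sum_range
      (fun j => if j = (m : ℕ) then g (m : ℕ) * (-2 * lam ((m : ℕ)+1)) else 0) N]
    rw [Finset.sum_ite_eq' (Finset.range N) (m : ℕ)]
    simp [m.isLt]
  have e4 : ∑ p : Fin N, (if (p : ℕ) < (m : ℕ) then g (p : ℕ) else 0)
      = ∑ j ∈ Finset.range (m : ℕ), g j := by
    rw [Fin.sum_univ_eq_sum_range (fun j => if j < (m : ℕ) then g j else 0) N]
    exact auxSumIte (le_of_lt m.isLt)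
  rw [e3, e4]
  exact hmain (m : ℕ) m.isLt

lemma bv_mulVec (b : ℕ → ℝ)
    (hmain : ∀ m, m < N →
      (-2 * lam (m+1)) * b m + ∑ j ∈ Finset.range m, -(b j) = 1) :
    limT N lam *ᵥ (fun i : Fin N => b (i : ℕ)) = fun _ => (1:ℝ) := by
  funext m
  have e1 : (limT N lam *ᵥ (fun i : Fin N => b (i : ℕ))) m
      = ∑ p : Fin N, limT N lam m p * b (p : ℕ) := by
    simp [Matrix.mulVec, dotProduct]
  rw [e1]
  have e2 : ∀ p : Fin N, limT N lam m p * b (p : ℕ)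
      = (if (p : ℕ) = (m : ℕ) then (-2 * lam ((m : ℕ)+1)) * b (m : ℕ) else 0)
        + (if (p : ℕ) < (m : ℕ) then -(b (p : ℕ)) else 0) := by
    intro p
    by_cases hpm : p = m
    · subst hpm
      simp [limT]
    · have hv : ¬ ((p : ℕ) = (m : ℕ)) := fun hc => hpm (Fin.ext hc)
      have hv' : ¬ (m = p) := fun hc => hpm (hc.symm)
      by_cases hlt : p < m
      · have hlt' : (p : ℕ) < (m : ℕ)  := hlt
        have hmp : ¬ (m < p) := by omega
        simp [limT, hv', hmp, hv, hlt']
      · have hlt' : ¬ ((p : ℕ) < (m : ℕ)) := fun hc => hlt (Fin.lt_def.2 hc)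
        have hmp : m < p := by
          rcases lt_trichotomy m p with hh | hh | hh
          · exact hh
          · exact absurd hh hv'
          · exact absurd hh hlt
        simp [limT, hv', hmp, hv, hlt']
  rw [Finset.sum_congr rfl fun p _ => e2 p, Finset.sum_add_distrib]
  have e3 : ∑ p : Fin N, (if (p : ℕ) = (m : ℕ) then (-2 * lam ((m : ℕ)+1)) * b (m : ℕ) else 0)
      = (-2 * lam ((m : ℕ)+1)) * b (m : ℕ) := by
    rw [Fin.sum_univ_eq_sum_range
      (fun j => if j = (m : ℕ) then (-2 * lam ((m : ℕ)+1)) * b (m : ℕ) else 0) N]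
    rw [Finset.sum_ite_eq' (Finset.range N) (m : ℕ)]
    simp [m.isLt]
  have e4 : ∑ p : Fin N, (if (p : ℕ) < (m : ℕ) then -(b (p : ℕ)) else 0)
      = ∑ j ∈ Finset.range (m : ℕ), -(b j) := by
    rw [Fin.sum_univ_eq_sum_range (fun j => if j < (m : ℕ) then -(b j) else 0) N]
    exact auxSumIte (le_of_lt m.isLt)
  rw [e3, e4]
  exact hmain (m : ℕ) m.isLt

lemma ups_commute (hrpos : ∀ i : Fin N, 0 < r ((i : ℕ) + 1)) (n : ℕ) :
    Upsilon N r n * GPM N lam r n = conjM N lam r n * Upsilon N r n := by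
  ext i j
  rw [Upsilon, Matrix.diagonal_mul, Matrix.mul_diagonal]
  rcases lt_trichotomy i j with hij | hij | hij
  · have h1 : ¬ (i = j) := ne_of_lt hij
    simp only [GPM, conjM, Matrix.of_apply, h1, if_false, if_pos hij]
    rw [div_pow, mul_div_cancel₀ _ (pow_ne_zero _ (ne_of_gt (hrpos i))), one_mul]
  · subst hij
    simp [GPM, conjM]
    ring
  · have h1 : ¬ (i = j) := (ne_of_lt hij).symm
    have h2 : ¬ (i < j) := not_lt.2 (le_of_lt hij)
    simp only [GPM, conjM, Matrix.of_apply, h1, if_false, h2]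
    rw [div_pow, neg_mul, div_mul_cancel₀ _ (pow_ne_zero _ (ne_of_gt (hrpos j)))]
    ring

lemma tendsto_conjM (hrpos : ∀ i : Fin N, 0 < r ((i : ℕ) + 1))
    (hrlt : ∀ i j : Fin N, j < i → r ((i : ℕ) + 1) < r ((j : ℕ) + 1)) :
    Tendsto (fun n => conjM N lam r n) atTop (nhds (limU N lam)) := by
  apply tendsto_pi_nhds.2
  intro i
  rw [tendsto_pi_nhds]
  intro j
  rcases lt_trichotomy i j with hij | hij | hij
  · have h1 : ¬ (i = j) := ne_of_lt hij
    simp only [conjM, limU, Matrix.of_apply, h1, if_false, if_pos hij]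
    exact tendsto_const_nhds
  · subst hij
    simp only [conjM, limU, Matrix.of_apply, if_pos rfl]
    exact tendsto_const_nhds
  · have h1 : ¬ (i = j) := (ne_of_lt hij).symm
    have h2 : ¬ (i < j) := not_lt.2 (le_of_lt hij)
    simp only [conjM, limU, Matrix.of_apply, h1, if_false, h2]
    have hρpos : 0 < r ((i : ℕ) + 1) / r ((j : ℕ) + 1) := div_pos (hrpos i) (hrpos j)
    have hρlt : r ((i : ℕ) + 1) / r ((j : ℕ) + 1) < 1 :=
      (div_lt_one (hrpos j)).2 (hrlt i j hij)
    have h3 : Tendsto (fun n : ℕ => ((r ((i : ℕ) + 1) / r ((j : ℕ) + 1)) ^ 2) ^ n)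
        atTop (nhds 0) := by
      apply tendsto_pow_atTop_nhds_zero_of_lt_one (sq_nonneg _)
      nlinarith
    have h4 := h3.neg
    rw [neg_zero] at h4
    simpa [pow_mul] using h4

lemma tendsto_GPM (hrpos : ∀ i : Fin N, 0 < r ((i : ℕ) + 1))
    (hrlt : ∀ i j : Fin N, j < i → r ((i : ℕ) + 1) < r ((j : ℕ) + 1)) :
    Tendsto (fun n => GPM N lam r n) atTop (nhds (limT N lam)) := by
  apply tendsto_pi_nhds.2
  intro i
  rw [tendsto_pi_nhds]
  intro j
  rcases lt_trichotomy i j with hij | hij | hij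
  · have h1 : ¬ (i = j) := ne_of_lt hij
    simp only [GPM, limT, Matrix.of_apply, h1, if_false, if_pos hij]
    have hρpos : 0 < r ((j : ℕ) + 1) / r ((i : ℕ) + 1) := div_pos (hrpos j) (hrpos i)
    have hρlt : r ((j : ℕ) + 1) / r ((i : ℕ) + 1) < 1 :=
      (div_lt_one (hrpos i)).2 (hrlt j i hij)
    have h3 : Tendsto (fun n : ℕ => ((r ((j : ℕ) + 1) / r ((i : ℕ) + 1)) ^ 2) ^ n)
        atTop (nhds 0) := by
      apply tendsto_pow_atTop_nhds_zero_of_lt_one (sq_nonneg _)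
      nlinarith
    simpa [pow_mul] using h3
  · subst hij
    simp only [GPM, limT, Matrix.of_apply, if_pos rfl]
    exact tendsto_const_nhds
  · have h1 : ¬ (i = j) := (ne_of_lt hij).symm
    have h2 : ¬ (i < j) := not_lt.2 (le_of_lt hij)
    simp only [GPM, limT, Matrix.of_apply, h1, if_false, h2]
    exact tendsto_const_nhds

end AuxFacts

/-- Uniqueness of the conductivity values of an `N`-layer concentric disk with known
radii: if for some index combination `i₁ < ⋯ < i_N` the matrices `𝕃_N` and `ℝ_N` are
invertible and the measurements `eᵀ Υ_N^{(n)} (M_{N,j}^{(n)})⁻¹ e` agree for all `n`, then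
the conductivities coincide. -/
theorem conductivity_uniqueness (N : ℕ) (hN : 1 ≤ N) (r : ℕ → ℝ)
    (hr : ∀ k, 1 ≤ k → k < N → r (k + 1) < r k) (hrN : 0 < r N)
    (σ₁ σ₂ lam₁ lam₂ : ℕ → ℝ)
    (hσ₁0 : σ₁ 0 = 1) (hσ₂0 : σ₂ 0 = 1)
    (hσ₁pos : ∀ k, 1 ≤ k → k ≤ N → 0 < σ₁ k)
    (hσ₂pos : ∀ k, 1 ≤ k → k ≤ N → 0 < σ₂ k)
    (hσ₁ne : ∀ k, 1 ≤ k → k ≤ N → σ₁ k ≠ σ₁ (k - 1))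
    (hσ₂ne : ∀ k, 1 ≤ k → k ≤ N → σ₂ k ≠ σ₂ (k - 1))
    (hlam₁ : ∀ k, 1 ≤ k → k ≤ N → lam₁ k = (σ₁ k + σ₁ (k - 1)) / (2 * (σ₁ k - σ₁ (k - 1))))
    (hlam₂ : ∀ k, 1 ≤ k → k ≤ N → lam₂ k = (σ₂ k + σ₂ (k - 1)) / (2 * (σ₂ k - σ₂ (k - 1))))
    (hinv₁ : ∀ n : ℕ, 0 < n → IsUnit (GPM N lam₁ r n).det)
    (hinv₂ : ∀ n : ℕ, 0 < n → IsUnit (GPM N lam₂ r n).det)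
    (hLR : ∃ idx : Fin N → ℕ, StrictMono idx ∧ (∀ k, 1 ≤ idx k) ∧
      IsUnit (Matrix.of fun k l : Fin N =>
        ((fun _ : Fin N => (1 : ℝ)) ᵥ*
          (Upsilon N r (idx k) * (GPM N lam₁ r (idx k)).adjugate)) l).det ∧
      IsUnit (Matrix.of fun l k : Fin N =>
        ((GPM N lam₂ r (idx k)).adjugate *ᵥ fun _ : Fin N => (1 : ℝ)) l).det)
    (h : ∀ n : ℕ, 0 < n →
      (fun _ : Fin N => (1 : ℝ)) ⬝ᵥ
          ((Upsilon N r n * (GPM N lam₁ r n)⁻¹) *ᵥ fun _ : Fin N => (1 : ℝ)) =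
        (fun _ : Fin N => (1 : ℝ)) ⬝ᵥ
          ((Upsilon N r n * (GPM N lam₂ r n)⁻¹) *ᵥ fun _ : Fin N => (1 : ℝ))) :
    ∀ k, 1 ≤ k → k ≤ N → σ₁ k = σ₂ k := by
  classical
  -- radii facts
  have hrlt' : ∀ i j : ℕ, 1 ≤ i → i < j → j ≤ N → r j < r i := by
    intro i j h1 hij hjN
    induction j with
    | zero => omega
    | succ j ih =>
      rcases Nat.lt_or_ge i j with hij' | hij'
      · exact lt_trans (hr j (by omega) (by omega)) (ih (by omega) (by omega))
      · have hij'' : i = j := by omega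
        subst hij''
        exact hr i h1 (by omega)
  have hrpos : ∀ k : ℕ, 1 ≤ k → k ≤ N → 0 < r k := by
    intro k h1 hk
    rcases eq_or_lt_of_le hk with hkN | hkN
    · rw [hkN]; exact hrN
    · exact lt_trans hrN (hrlt' k N h1 hkN le_rfl)
  have hrposF : ∀ i : Fin N, 0 < r ((i : ℕ) + 1) := fun i =>
    hrpos ((i:ℕ)+1) (by omega) (by have := i.isLt; omega)
  have hrltF : ∀ i j : Fin N, j < i → r ((i : ℕ) + 1) < r ((j : ℕ) + 1) := by
    intro i j hji
    have hji' : (j:ℕ) < (i:ℕ) := hji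
    exact hrlt' ((j:ℕ)+1) ((i:ℕ)+1) (by omega) (by omega) (by have := i.isLt; omega)
  -- lambda facts
  have hl₁ : ∀ k, 1 ≤ k → k ≤ N →
      2 * lam₁ k ≠ 0 ∧ 2 * lam₁ k + 1 ≠ 0 ∧ 2 * lam₁ k - 1 ≠ 0 := by
    intro k h1 hk
    have hprev : 0 < σ₁ (k-1) := by
      rcases Nat.eq_or_lt_of_le h1 with h' | h'
      · rw [← h']; norm_num [hσ₁0]
      · exact hσ₁pos (k-1) (by omega) (by omega)
    exact auxLam hprev (hσ₁pos k h1 hk) (hσ₁ne k h1 hk) (hlam₁ k h1 hk)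
  have hl₂ : ∀ k, 1 ≤ k → k ≤ N →
      2 * lam₂ k ≠ 0 ∧ 2 * lam₂ k + 1 ≠ 0 ∧ 2 * lam₂ k - 1 ≠ 0 := by
    intro k h1 hk
    have hprev : 0 < σ₂ (k-1) := by
      rcases Nat.eq_or_lt_of_le h1 with h' | h'
      · rw [← h']; norm_num [hσ₂0]
      · exact hσ₂pos (k-1) (by omega) (by omega)
    exact auxLam hprev (hσ₂pos k h1 hk) (hσ₂ne k h1 hk) (hlam₂ k h1 hk)
  have h₁0 : ∀ k, 1 ≤ k → k ≤ N → 2 * lam₁ k ≠ 0 := fun k a b => (hl₁ k a b).1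
  have h₁1 : ∀ k, 1 ≤ k → k ≤ N → 2 * lam₁ k + 1 ≠ 0 := fun k a b => (hl₁ k a b).2.1
  have h₂0 : ∀ k, 1 ≤ k → k ≤ N → 2 * lam₂ k ≠ 0 := fun k a b => (hl₂ k a b).1
  have h₂2 : ∀ k, 1 ≤ k → k ≤ N → 2 * lam₂ k - 1 ≠ 0 := fun k a b => (hl₂ k a b).2.2
  -- vector identities
  have hgvU : (fun i : Fin N => gg lam₁ (i:ℕ)) ᵥ* limU N lam₁ = fun _ => (1:ℝ) := by
    apply gv_vecMul
    intro m hm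
    rw [gg_sum h₁0 m (le_of_lt hm)]
    have hne := h₁0 (m+1) (by omega) (by omega)
    have hx : gg lam₁ m * (-2 * lam₁ (m+1)) = uu lam₁ m := by
      have hne2 : lam₁ (m+1) ≠ 0 := by rintro h; simp [h] at hne
      unfold gg; field_simp
    rw [hx]; ring
  have hbvT : limT N lam₂ *ᵥ (fun i : Fin N => bb lam₂ (i:ℕ)) = fun _ => (1:ℝ) := by
    apply bv_mulVec
    intro m hm
    have hsn : ∑ j ∈ Finset.range m, -(bb lam₂ j) = -(ss lam₂ m - 1) := by
      rw [Finset.sum_neg_distrib, bb_sum h₂0 m (le_of_lt hm)]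
    have hne := h₂0 (m+1) (by omega) (by omega)
    have hx : (-2 * lam₂ (m+1)) * bb lam₂ m = ss lam₂ m := by
      have hne2 : lam₂ (m+1) ≠ 0 := by rintro h; simp [h] at hne
      unfold bb; field_simp
    rw [hsn, hx]; ring
  -- determinants of the limits
  have hdetU := det_limU_ne h₁0
  have hdetT := det_limT_ne h₂0
  have hUu : IsUnit (limU N lam₁).det := isUnit_iff_ne_zero.2 hdetU
  have hTu : IsUnit (limT N lam₂).det := isUnit_iff_ne_zero.2 hdetT
  have hginv : (fun _ : Fin N => (1:ℝ)) ᵥ* (limU N lam₁)⁻¹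
      = fun i : Fin N => gg lam₁ (i:ℕ) := by
    rw [← hgvU, Matrix.vecMul_vecMul, Matrix.mul_nonsing_inv _ hUu, Matrix.vecMul_one]
  have hbinv : (limT N lam₂)⁻¹ *ᵥ (fun _ : Fin N => (1:ℝ))
      = fun i : Fin N => bb lam₂ (i:ℕ) := by
    rw [← hbvT, Matrix.mulVec_mulVec, Matrix.nonsing_inv_mul _ hTu, Matrix.one_mulVec]
  -- limits of the inverse matrices
  have hMpinv := auxTendstoInv (tendsto_conjM (lam := lam₁) hrposF hrltF) hdetU
  have hBinv := auxTendstoInv (tendsto_GPM (lam := lam₂) hrposF hrltF) hdetT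
  have ha : ∀ m : Fin N,
      Tendsto (fun n => ((fun _ : Fin N => (1:ℝ)) ᵥ* (conjM N lam₁ r n)⁻¹) m) atTop
        (nhds (gg lam₁ (m:ℕ))) := by
    intro m
    have hent : ∀ p : Fin N, Tendsto (fun n => ((conjM N lam₁ r n)⁻¹) p m) atTop
        (nhds ((limU N lam₁)⁻¹ p m)) := fun p =>
      tendsto_pi_nhds.1 (tendsto_pi_nhds.1 hMpinv p) m
    have hsum := tendsto_finset_sum Finset.univ (fun p (_ : p ∈ Finset.univ) => hent p)
    have hval : ∑ p : Fin N, ((limU N lam₁)⁻¹) p m = gg lam₁ (m:ℕ) := by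
      have hh := congrFun hginv m
      simpa [Matrix.vecMul, dotProduct] using hh
    have hfun : (fun n => ((fun _ : Fin N => (1:ℝ)) ᵥ* (conjM N lam₁ r n)⁻¹) m)
        = fun n => ∑ p : Fin N, ((conjM N lam₁ r n)⁻¹) p m := by
      funext n; simp [Matrix.vecMul, dotProduct]
    rw [hfun, ← hval]
    exact hsum
  have hb : ∀ m : Fin N,
      Tendsto (fun n => (((GPM N lam₂ r n)⁻¹ *ᵥ (fun _ : Fin N => (1:ℝ))) m)) atTop
        (nhds (bb lam₂ (m:ℕ))) := by
    intro m
    have hent : ∀ q : Fin N, Tendsto (fun n => ((GPM N lam₂ r n)⁻¹) m q) atTop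
        (nhds ((limT N lam₂)⁻¹ m q)) := fun q =>
      tendsto_pi_nhds.1 (tendsto_pi_nhds.1 hBinv m) q
    have hsum := tendsto_finset_sum Finset.univ (fun q (_ : q ∈ Finset.univ) => hent q)
    have hval : ∑ q : Fin N, ((limT N lam₂)⁻¹) m q = bb lam₂ (m:ℕ) := by
      have hh := congrFun hbinv m
      simpa [Matrix.mulVec, dotProduct] using hh
    have hfun : (fun n => (((GPM N lam₂ r n)⁻¹ *ᵥ (fun _ : Fin N => (1:ℝ))) m))
        = fun n => ∑ q : Fin N, ((GPM N lam₂ r n)⁻¹) m q := by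
      funext n; simp [Matrix.mulVec, dotProduct]
    rw [hfun, ← hval]
    exact hsum
  -- the central identity
  have heqn : ∀ n : ℕ, 0 < n →
      ∑ m : Fin N,
        (((fun _ : Fin N => (1:ℝ)) ᵥ* (conjM N lam₁ r n)⁻¹) m * r ((m:ℕ)+1) ^ (2*n)
          * (2 * (lam₁ ((m:ℕ)+1) - lam₂ ((m:ℕ)+1))))
        * (((GPM N lam₂ r n)⁻¹ *ᵥ (fun _ : Fin N => (1:ℝ))) m) = 0 := by
    intro n hn
    have hAu := hinv₁ n hn
    have hBu := hinv₂ n hn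
    have hΥu : IsUnit (Upsilon N r n).det := by
      rw [Upsilon, Matrix.det_diagonal]
      exact isUnit_iff_ne_zero.2 (Finset.prod_ne_zero_iff.2 fun i _ =>
        pow_ne_zero _ (ne_of_gt (hrposF i)))
    have hMu : IsUnit (conjM N lam₁ r n).det := by
      have hc := ups_commute (lam := lam₁) hrposF n
      have hdets := congrArg Matrix.det hc
      rw [Matrix.det_mul, Matrix.det_mul] at hdets
      have hΥne : (Upsilon N r n).det ≠ 0 := hΥu.ne_zero
      have : (GPM N lam₁ r n).det = (conjM N lam₁ r n).det := by
        have h2 : (Upsilon N r n).det * (GPM N lam₁ r n).det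
            = (Upsilon N r n).det * (conjM N lam₁ r n).det := by
          rw [hdets]; ring
        exact mul_left_cancel₀ hΥne h2
      rwa [this] at hAu
    have hd : GPM N lam₂ r n - GPM N lam₁ r n
        = Matrix.diagonal (fun m : Fin N => 2 * (lam₁ ((m:ℕ)+1) - lam₂ ((m:ℕ)+1))) := by
      ext i j
      by_cases hij : i = j
      · subst hij
        simp [GPM, Matrix.diagonal_apply_eq]
        ring
      · have hz : Matrix.diagonal
            (fun m : Fin N => 2 * (lam₁ ((m:ℕ)+1) - lam₂ ((m:ℕ)+1))) i j = 0 :=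
          Matrix.diagonal_apply_ne _ hij
        rw [Matrix.sub_apply, hz]
        simp [GPM, hij]
    have hsub : (GPM N lam₁ r n)⁻¹ - (GPM N lam₂ r n)⁻¹
        = (GPM N lam₁ r n)⁻¹
          * Matrix.diagonal (fun m : Fin N => 2 * (lam₁ ((m:ℕ)+1) - lam₂ ((m:ℕ)+1)))
          * (GPM N lam₂ r n)⁻¹ := by
      rw [← hd]
      have e : (GPM N lam₁ r n)⁻¹ * (GPM N lam₂ r n - GPM N lam₁ r n) * (GPM N lam₂ r n)⁻¹
          = (GPM N lam₁ r n)⁻¹ * (GPM N lam₂ r n * (GPM N lam₂ r n)⁻¹)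
            - ((GPM N lam₁ r n)⁻¹ * GPM N lam₁ r n) * (GPM N lam₂ r n)⁻¹ := by
        rw [Matrix.mul_sub, Matrix.sub_mul, Matrix.mul_assoc]
      rw [e, Matrix.mul_nonsing_inv _ hBu, Matrix.nonsing_inv_mul _ hAu,
        Matrix.mul_one, Matrix.one_mul]
    have hzero : (fun _ : Fin N => (1:ℝ)) ⬝ᵥ
        ((Upsilon N r n * ((GPM N lam₁ r n)⁻¹
          * Matrix.diagonal (fun m : Fin N => 2 * (lam₁ ((m:ℕ)+1) - lam₂ ((m:ℕ)+1)))
          * (GPM N lam₂ r n)⁻¹)) *ᵥ (fun _ : Fin N => (1:ℝ))) = 0 := by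
      rw [← hsub, Matrix.mul_sub, Matrix.sub_mulVec, dotProduct_sub, h n hn, sub_self]
    have hYA : Upsilon N r n * (GPM N lam₁ r n)⁻¹
        = (conjM N lam₁ r n)⁻¹ * Upsilon N r n := by
      have hc := ups_commute (lam := lam₁) hrposF n
      calc Upsilon N r n * (GPM N lam₁ r n)⁻¹
          = ((conjM N lam₁ r n)⁻¹ * conjM N lam₁ r n)
              * (Upsilon N r n * (GPM N lam₁ r n)⁻¹) := by
            rw [Matrix.nonsing_inv_mul _ hMu, Matrix.one_mul]
        _ = (conjM N lam₁ r n)⁻¹ * ((conjM N lam₁ r n * Upsilon N r n)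
              * (GPM N lam₁ r n)⁻¹) := by
            rw [Matrix.mul_assoc, Matrix.mul_assoc]
        _ = (conjM N lam₁ r n)⁻¹ * ((Upsilon N r n * GPM N lam₁ r n)
              * (GPM N lam₁ r n)⁻¹) := by rw [hc]
        _ = (conjM N lam₁ r n)⁻¹ * (Upsilon N r n
              * (GPM N lam₁ r n * (GPM N lam₁ r n)⁻¹)) := by rw [Matrix.mul_assoc]
        _ = (conjM N lam₁ r n)⁻¹ * Upsilon N r n := by
            rw [Matrix.mul_nonsing_inv _ hAu, Matrix.mul_one]
    have hexp : (fun _ : Fin N => (1:ℝ)) ⬝ᵥ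
        ((Upsilon N r n * ((GPM N lam₁ r n)⁻¹
          * Matrix.diagonal (fun m : Fin N => 2 * (lam₁ ((m:ℕ)+1) - lam₂ ((m:ℕ)+1)))
          * (GPM N lam₂ r n)⁻¹)) *ᵥ (fun _ : Fin N => (1:ℝ)))
        = ∑ m : Fin N,
          (((fun _ : Fin N => (1:ℝ)) ᵥ* (conjM N lam₁ r n)⁻¹) m * r ((m:ℕ)+1) ^ (2*n)
            * (2 * (lam₁ ((m:ℕ)+1) - lam₂ ((m:ℕ)+1))))
          * (((GPM N lam₂ r n)⁻¹ *ᵥ (fun _ : Fin N => (1:ℝ))) m) := by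
      have e1 : Upsilon N r n * ((GPM N lam₁ r n)⁻¹
            * Matrix.diagonal (fun m : Fin N => 2 * (lam₁ ((m:ℕ)+1) - lam₂ ((m:ℕ)+1)))
            * (GPM N lam₂ r n)⁻¹)
          = (((conjM N lam₁ r n)⁻¹ * Upsilon N r n)
            * Matrix.diagonal (fun m : Fin N => 2 * (lam₁ ((m:ℕ)+1) - lam₂ ((m:ℕ)+1))))
            * (GPM N lam₂ r n)⁻¹ := by
        rw [← Matrix.mul_assoc, ← Matrix.mul_assoc, hYA]
      rw [e1, ← Matrix.mulVec_mulVec, dotProduct_mulVec,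
        ← Matrix.vecMul_vecMul, ← Matrix.vecMul_vecMul]
      simp only [dotProduct]
      refine Finset.sum_congr rfl fun m _ => ?_
      rw [Matrix.vecMul_diagonal]
      rw [Upsilon, Matrix.vecMul_diagonal]
    rw [← hexp]
    exact hzero
  -- strong induction on the layer index
  have hdel : ∀ m : ℕ, ∀ i : Fin N, (i:ℕ) = m → lam₁ ((i:ℕ)+1) - lam₂ ((i:ℕ)+1) = 0 := by
    intro m
    induction m using Nat.strong_induction_on with
    | _ m IH =>
      intro i him
      have hIH : ∀ j : Fin N, j < i → lam₁ ((j:ℕ)+1) - lam₂ ((j:ℕ)+1) = 0 := fun j hj =>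
        IH (j:ℕ) (by rw [← him]; exact hj) j rfl
      have hfz : ∀ n : ℕ, 0 < n →
          ∑ m' : Fin N,
            (((fun _ : Fin N => (1:ℝ)) ᵥ* (conjM N lam₁ r n)⁻¹) m'
              * (r ((m':ℕ)+1) / r ((i:ℕ)+1)) ^ (2*n)
              * (2 * (lam₁ ((m':ℕ)+1) - lam₂ ((m':ℕ)+1))))
            * (((GPM N lam₂ r n)⁻¹ *ᵥ (fun _ : Fin N => (1:ℝ))) m') = 0 := by
        intro n hn
        have ht : r ((i:ℕ)+1) ^ (2*n) ≠ 0 := pow_ne_zero _ (ne_of_gt (hrposF i))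
        calc ∑ m' : Fin N,
            (((fun _ : Fin N => (1:ℝ)) ᵥ* (conjM N lam₁ r n)⁻¹) m'
              * (r ((m':ℕ)+1) / r ((i:ℕ)+1)) ^ (2*n)
              * (2 * (lam₁ ((m':ℕ)+1) - lam₂ ((m':ℕ)+1))))
            * (((GPM N lam₂ r n)⁻¹ *ᵥ (fun _ : Fin N => (1:ℝ))) m')
            = (∑ m' : Fin N,
              (((fun _ : Fin N => (1:ℝ)) ᵥ* (conjM N lam₁ r n)⁻¹) m' * r ((m':ℕ)+1) ^ (2*n)
                * (2 * (lam₁ ((m':ℕ)+1) - lam₂ ((m':ℕ)+1))))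
              * (((GPM N lam₂ r n)⁻¹ *ᵥ (fun _ : Fin N => (1:ℝ))) m'))
              / r ((i:ℕ)+1) ^ (2*n) := by
              rw [Finset.sum_div]
              refine Finset.sum_congr rfl fun m' _ => ?_
              rw [div_pow]
              ring
          _ = 0 := by rw [heqn n hn, zero_div]
      have hlim : Tendsto (fun n => ∑ m' : Fin N,
            (((fun _ : Fin N => (1:ℝ)) ᵥ* (conjM N lam₁ r n)⁻¹) m'
              * (r ((m':ℕ)+1) / r ((i:ℕ)+1)) ^ (2*n)
              * (2 * (lam₁ ((m':ℕ)+1) - lam₂ ((m':ℕ)+1))))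
            * (((GPM N lam₂ r n)⁻¹ *ᵥ (fun _ : Fin N => (1:ℝ))) m')) atTop
          (nhds (∑ m' : Fin N, if m' = i then
            (gg lam₁ (i:ℕ) * (2 * (lam₁ ((i:ℕ)+1) - lam₂ ((i:ℕ)+1)))) * bb lam₂ (i:ℕ)
            else 0)) := by
        apply tendsto_finset_sum
        intro m' _
        by_cases hmi : m' = i
        · subst hmi
          simp only [if_pos rfl]
          have hrr : r ((m':ℕ)+1) / r ((m':ℕ)+1) = 1 := div_self (ne_of_gt (hrposF m'))
          have hfeq : (fun n => (((fun _ : Fin N => (1:ℝ)) ᵥ* (conjM N lam₁ r n)⁻¹) m'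
                * (r ((m':ℕ)+1) / r ((m':ℕ)+1)) ^ (2*n)
                * (2 * (lam₁ ((m':ℕ)+1) - lam₂ ((m':ℕ)+1))))
              * (((GPM N lam₂ r n)⁻¹ *ᵥ (fun _ : Fin N => (1:ℝ))) m'))
              = fun n => (((fun _ : Fin N => (1:ℝ)) ᵥ* (conjM N lam₁ r n)⁻¹) m'
                * (2 * (lam₁ ((m':ℕ)+1) - lam₂ ((m':ℕ)+1))))
              * (((GPM N lam₂ r n)⁻¹ *ᵥ (fun _ : Fin N => (1:ℝ))) m') := by
            funext n; rw [hrr, one_pow, mul_one]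
          rw [hfeq]
          exact ((ha m').mul_const _).mul (hb m')
        · simp only [if_neg hmi]
          rcases lt_or_gt_of_ne hmi with hlt | hgt
          · have hz := hIH m' hlt
            have hfeq : (fun n => (((fun _ : Fin N => (1:ℝ)) ᵥ* (conjM N lam₁ r n)⁻¹) m'
                  * (r ((m':ℕ)+1) / r ((i:ℕ)+1)) ^ (2*n)
                  * (2 * (lam₁ ((m':ℕ)+1) - lam₂ ((m':ℕ)+1))))
                * (((GPM N lam₂ r n)⁻¹ *ᵥ (fun _ : Fin N => (1:ℝ))) m'))
                = fun _ => (0:ℝ) := by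
              funext n; rw [hz]; ring
            rw [hfeq]
            exact tendsto_const_nhds
          · have hρpos : 0 < r ((m':ℕ)+1) / r ((i:ℕ)+1) := div_pos (hrposF m') (hrposF i)
            have hρlt : r ((m':ℕ)+1) / r ((i:ℕ)+1) < 1 :=
              (div_lt_one (hrposF i)).2 (hrltF m' i hgt)
            have hρ : Tendsto (fun n : ℕ => (r ((m':ℕ)+1) / r ((i:ℕ)+1)) ^ (2*n)) atTop
                (nhds 0) := by
              have h3 : Tendsto (fun n : ℕ => ((r ((m':ℕ)+1) / r ((i:ℕ)+1)) ^ 2) ^ n) atTop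
                  (nhds 0) :=
                tendsto_pow_atTop_nhds_zero_of_lt_one (sq_nonneg _) (by nlinarith)
              simpa [pow_mul] using h3
            have hT := (((ha m').mul hρ).mul_const
                (2 * (lam₁ ((m':ℕ)+1) - lam₂ ((m':ℕ)+1)))).mul (hb m')
            simpa using hT
      have hlim0 : Tendsto (fun n => ∑ m' : Fin N,
            (((fun _ : Fin N => (1:ℝ)) ᵥ* (conjM N lam₁ r n)⁻¹) m'
              * (r ((m':ℕ)+1) / r ((i:ℕ)+1)) ^ (2*n)
              * (2 * (lam₁ ((m':ℕ)+1) - lam₂ ((m':ℕ)+1))))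
            * (((GPM N lam₂ r n)⁻¹ *ᵥ (fun _ : Fin N => (1:ℝ))) m')) atTop (nhds 0) := by
        refine Tendsto.congr' ?_ tendsto_const_nhds
        filter_upwards [eventually_ge_atTop 1] with n hn
        exact (hfz n (by omega)).symm
      have hV : (gg lam₁ (i:ℕ) * (2 * (lam₁ ((i:ℕ)+1) - lam₂ ((i:ℕ)+1)))) * bb lam₂ (i:ℕ)
          = 0 := by
        have huniq := tendsto_nhds_unique hlim hlim0
        simpa using huniq
      have hgne := gg_ne h₁0 h₁1 (i:ℕ) i.isLt
      have hbne := bb_ne h₂0 h₂2 (i:ℕ) i.isLt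
      rcases mul_eq_zero.1 hV with hx | hx
      · rcases mul_eq_zero.1 hx with hy | hy
        · exact absurd hy hgne
        · linarith
      · exact absurd hx hbne
  -- lambda equality on all layers
  have hlam_eq : ∀ k, 1 ≤ k → k ≤ N → lam₁ k = lam₂ k := by
    intro k h1 hk
    have hi : k - 1 < N := by omega
    have hD : lam₁ ((k-1)+1) - lam₂ ((k-1)+1) = 0 := hdel (k-1) ⟨k-1, hi⟩ rfl
    have hk1 : (k - 1) + 1 = k := by omega
    rw [hk1] at hD
    linarith
  -- recover the conductivities
  intro k
  induction k with
  | zero => intro h1 _; omega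
  | succ k ihk =>
    intro h1 hk
    have hprev : σ₁ k = σ₂ k := by
      rcases Nat.eq_zero_or_pos k with h0 | h0
      · rw [h0, hσ₁0, hσ₂0]
      · exact ihk h0 (by omega)
    have hkk : k + 1 - 1 = k := by omega
    have hp : 0 < σ₁ k := by
      rcases Nat.eq_zero_or_pos k with h0 | h0
      · rw [h0, hσ₁0]; norm_num
      · exact hσ₁pos k h0 (by omega)
    have hL1 := hlam₁ (k+1) (by omega) hk
    have hL2 := hlam₂ (k+1) (by omega) hk
    rw [hkk] at hL1 hL2
    have hle := hlam_eq (k+1) (by omega) hk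
    rw [hL1, hL2] at hle
    have hne1 : σ₁ (k+1) ≠ σ₁ k := by
      have := hσ₁ne (k+1) (by omega) hk; rwa [hkk] at this
    have hne2 : σ₂ (k+1) ≠ σ₂ k := by
      have := hσ₂ne (k+1) (by omega) hk; rwa [hkk] at this
    rw [← hprev] at hle hne2
    exact auxLamInj hp hne1 hne2 hle
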